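/- Let Y be a compact Hausdorff topological space and let (μ_i)_{i∈I} be a family of Radon probability measures on Y. Then the following are equivalent: (a) for every y ∈ Y the Dirac measure δ_y lies in the weak-* closure of the set {μ_i : i ∈ I} inside the space P(Y) of Radon probability measures on Y; (b) for every continuous function f : Y → ℝ one has ‖f‖_∞ = sup_{i∈I} |∫_Y f dμ_i|, i.e. the linear map from C(Y) to ℓ∞(I) sending f to the bounded family (∫_Y f dμ_i)_{i∈I} is isometric. -/

import Mathlib

open MeasureTheory Filter Topology BoundedContinuousFunction
open scoped NNReal

private lemma sq_int_le {Y : Type*} [MeasurableSpace Y] [TopologicalSpace Y]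
    [OpensMeasurableSpace Y] (ν : Measure Y) [IsProbabilityMeasure ν] (h : Y →ᵇ ℝ) :
    (∫ x, h x ∂ν) ^ 2 ≤ ∫ x, (h x) ^ 2 ∂ν := by
  set m := ∫ x, h x ∂ν with hm
  have hi : Integrable (fun x => h x) ν := h.integrable ν
  have hi2 : Integrable (fun x => (h x) ^ 2) ν := by
    exact ((h * h).integrable ν).congr (ae_of_all _ fun x => by simp [pow_two])
  have key : (0:ℝ) ≤ ∫ x, (h x - m) ^ 2 ∂ν := integral_nonneg fun x => sq_nonneg _
  have expand : ∫ x, (h x - m) ^ 2 ∂ν = (∫ x, (h x) ^ 2 ∂ν) - 2 * m * m + m ^ 2 := by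
    have e : (fun x => (h x - m) ^ 2) = fun x => (h x) ^ 2 - (2 * m) * h x + m ^ 2 := by
      funext x; ring
    have e1 : ∫ x, ((h x) ^ 2 - (2 * m) * h x + m ^ 2) ∂ν
        = ∫ x, ((h x) ^ 2 - (2 * m) * h x) ∂ν + ∫ _x, (m ^ 2 : ℝ) ∂ν :=
      integral_add (hi2.sub (hi.const_mul (2 * m))) (integrable_const _)
    have e2 : ∫ x, ((h x) ^ 2 - (2 * m) * h x) ∂ν
        = ∫ x, (h x) ^ 2 ∂ν - ∫ x, (2 * m) * h x ∂ν := integral_sub hi2 (hi.const_mul (2 * m))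
    have e3 : ∫ x, (2 * m) * h x ∂ν = (2 * m) * ∫ x, h x ∂ν := MeasureTheory.integral_const_mul _ _
    rw [e, e1, e2, e3, integral_const, probReal_univ]
    simp [← hm]
  nlinarith [key, expand]

/-- For a compact Hausdorff space `Y` and a family `(μ i)` of (Radon = Borel)
probability measures on `Y`, every Dirac measure lies in the weak-* closure of the family
if and only if the map `C(Y, ℝ) → ℓ∞(I)`, `f ↦ (∫ f dμ i)ᵢ`, is isometric. -/
theorem dirac_mem_closure_iff_isometric
    {Y : Type*} [TopologicalSpace Y] [CompactSpace Y] [T2Space Y]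
    [MeasurableSpace Y] [BorelSpace Y]
    {I : Type*} (μ : I → ProbabilityMeasure Y) :
    (∀ y : Y,
      (⟨Measure.dirac y, inferInstance⟩ : ProbabilityMeasure Y) ∈ closure (Set.range μ)) ↔
    (∀ f : C(Y, ℝ), ‖f‖ = ⨆ i : I, |∫ y, f y ∂(μ i : Measure Y)|) := by
  constructor
  · intro ha f
    by_cases hY : Nonempty Y
    · obtain ⟨y0⟩ := hY
      have hcl := ha y0
      have hne : (Set.range μ).Nonempty := by
        by_contra h
        rw [Set.not_nonempty_iff_eq_empty] at h
        rw [h] at hcl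
        simp at hcl
        exact hcl
      obtain ⟨ν0, i0, -⟩ := hne
      haveI : Nonempty I := ⟨i0⟩
      set g : I → ℝ := fun i => |∫ x, f x ∂(μ i : Measure Y)| with hg
      have hbd : ∀ i, g i ≤ ‖f‖ := by
        intro i
        calc |∫ x, f x ∂(μ i : Measure Y)| = ‖∫ x, f x ∂(μ i : Measure Y)‖ :=
              (Real.norm_eq_abs _).symm
          _ ≤ ∫ x, ‖f x‖ ∂(μ i : Measure Y) := norm_integral_le_integral_norm _
          _ ≤ ∫ _x, ‖f‖ ∂(μ i : Measure Y) := by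
              apply integral_mono _ (integrable_const _) fun x => f.norm_coe_le_norm x
              exact ((mkOfCompact f).integrable _).norm
          _ = ‖f‖ := by simp
      have hbdd : BddAbove (Set.range g) := ⟨‖f‖, by rintro _ ⟨i, rfl⟩; exact hbd i⟩
      apply le_antisymm
      · haveI : Nonempty Y := ⟨y0⟩
        obtain ⟨ymax, -, hymax⟩ := isCompact_univ.exists_isMaxOn Set.univ_nonempty
          ((continuous_abs.comp f.continuous).continuousOn :
            ContinuousOn (fun x => |f x|) Set.univ)
        have h2 : |f ymax| ≤ ‖f‖ := by
          simpa [Real.norm_eq_abs] using f.norm_coe_le_norm ymax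
        have h1 : ‖f‖ ≤ |f ymax| := by
          apply (f.norm_le (abs_nonneg _)).mpr
          intro x
          simpa [Real.norm_eq_abs] using hymax (Set.mem_univ x)
        have hc : Continuous fun ν : ProbabilityMeasure Y =>
            ∫ x, (mkOfCompact f) x ∂(ν : Measure Y) :=
          ProbabilityMeasure.continuous_integral_boundedContinuousFunction (mkOfCompact f)
        have hmem : (∫ x, (mkOfCompact f) x
              ∂((⟨Measure.dirac ymax, inferInstance⟩ : ProbabilityMeasure Y) : Measure Y)) ∈
            closure ((fun ν : ProbabilityMeasure Y => ∫ x, (mkOfCompact f) x ∂(ν : Measure Y))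
              '' (Set.range μ)) :=
          (image_closure_subset_closure_image hc) ⟨_, ha ymax, rfl⟩
        have hdir : (∫ x, (mkOfCompact f) x
              ∂((⟨Measure.dirac ymax, inferInstance⟩ : ProbabilityMeasure Y) : Measure Y))
            = f ymax := by
          simp [integral_dirac]
        have hclosed : IsClosed {x : ℝ | |x| ≤ ⨆ i, g i} :=
          isClosed_le continuous_abs continuous_const
        have hsubset : ((fun ν : ProbabilityMeasure Y => ∫ x, (mkOfCompact f) x ∂(ν : Measure Y))
              '' (Set.range μ)) ⊆ {x : ℝ | |x| ≤ ⨆ i, g i} := by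
          rintro _ ⟨_, ⟨i, rfl⟩, rfl⟩
          simpa using le_ciSup hbdd i
        have := hclosed.closure_subset_iff.mpr hsubset hmem
        rw [hdir] at this
        exact h1.trans this
      · exact ciSup_le hbd
    · haveI hIY : IsEmpty Y := not_nonempty_iff.mp hY
      haveI : IsEmpty I := ⟨fun i => hIY.false (μ i).nonempty.some⟩
      have hf0 : f = 0 := by ext x; exact (hIY.false x).elim
      rw [hf0]
      simp [Real.iSup_of_isEmpty]
  · intro hb y
    haveI hYne : Nonempty Y := ⟨y⟩
    have hI : Nonempty I := by
      by_contra hI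
      haveI : IsEmpty I := not_nonempty_iff.mp hI
      have h1 := hb 1
      rw [Real.iSup_of_isEmpty] at h1
      simp at h1
    by_contra hy
    set δy : ProbabilityMeasure Y := ⟨Measure.dirac y, inferInstance⟩ with hδydef
    set E : ProbabilityMeasure Y → ((Y →ᵇ ℝ≥0) → ℝ≥0) :=
      fun ν f => ν.toWeakDualBCNN f with hEdef
    have h3 : IsInducing (fun (φ : WeakDual ℝ≥0 (Y →ᵇ ℝ≥0)) (f : Y →ᵇ ℝ≥0) => φ f) := ⟨rfl⟩
    have h2 : IsInducing (FiniteMeasure.toWeakDualBCNN :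
        FiniteMeasure Y → WeakDual ℝ≥0 (Y →ᵇ ℝ≥0)) := ⟨rfl⟩
    have h1 : IsInducing (ProbabilityMeasure.toFiniteMeasure :
        ProbabilityMeasure Y → FiniteMeasure Y) := ⟨rfl⟩
    have hind : IsInducing E := h3.comp (h2.comp h1)
    have hy' : E δy ∉ closure (E '' Set.range μ) := by
      intro h
      exact hy (by rw [hind.closure_eq_preimage_closure_image]; exact h)
    rw [mem_closure_iff] at hy'
    push_neg at hy'
    obtain ⟨U, hUopen, hUy, hUdisj⟩ := hy'
    obtain ⟨F, u, hu, hpi⟩ := isOpen_pi_iff.mp hUopen _ hUy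
    rw [Set.eq_empty_iff_forall_notMem] at hUdisj
    have hF : F.Nonempty := by
      rcases F.eq_empty_or_nonempty with h | h
      · exfalso
        refine hUdisj (E (μ hI.some)) ⟨?_, Set.mem_image_of_mem _ (Set.mem_range_self _)⟩
        apply hpi
        intro f hf
        simp [h] at hf
      · exact h
    have hball : ∀ f ∈ F, ∃ ε > 0, Metric.ball (E δy f) ε ⊆ u f := fun f hf =>
      Metric.isOpen_iff.mp (hu f hf).1 _ (hu f hf).2
    choose! ε hεpos hεball using hball
    set δ : ℝ := F.inf' hF ε with hδdef
    have hδpos : 0 < δ := (Finset.lt_inf'_iff hF).mpr hεpos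
    have hbad : ∀ i, ∃ f ∈ F, E (μ i) f ∉ u f := by
      intro i
      by_contra h
      push_neg at h
      exact hUdisj (E (μ i)) ⟨hpi fun f hf => h f hf,
        Set.mem_image_of_mem _ (Set.mem_range_self _)⟩
    have hEval : ∀ (ν : ProbabilityMeasure Y) (f : Y →ᵇ ℝ≥0),
        (E ν f : ℝ) = ∫ x, (f x : ℝ) ∂(ν : Measure Y) := by
      intro ν f
      have h0 : E ν f = (∫⁻ x, f x ∂(ν : Measure Y)).toNNReal := rfl
      rw [h0]
      exact f.toReal_lintegral_coe_eq_integral (ν : Measure Y)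
    have hEdirac : ∀ f : Y →ᵇ ℝ≥0, (E δy f : ℝ) = (f y : ℝ) := by
      intro f
      rw [hEval]
      simp [hδydef, integral_dirac]
    have hcont : ∀ f : Y →ᵇ ℝ≥0, Continuous fun x => ((f x : ℝ) - (f y : ℝ)) ^ 2 :=
      fun f => ((NNReal.continuous_coe.comp f.continuous).sub continuous_const).pow 2
    set G : Y →ᵇ ℝ := ∑ f ∈ F, mkOfCompact ⟨fun x => ((f x : ℝ) - (f y : ℝ)) ^ 2, hcont f⟩
      with hGdef
    have hGapp : ∀ x, G x = ∑ f ∈ F, ((f x : ℝ) - (f y : ℝ)) ^ 2 := by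
      intro x
      simp [hGdef]
    have hint : ∀ (i : I) (f : Y →ᵇ ℝ≥0),
        Integrable (fun x => ((f x : ℝ) - (f y : ℝ)) ^ 2) (μ i : Measure Y) := fun i f =>
      (mkOfCompact ⟨fun x => ((f x : ℝ) - (f y : ℝ)) ^ 2, hcont f⟩).integrable _
    have hGint : ∀ i, ∫ x, G x ∂(μ i : Measure Y)
        = ∑ f ∈ F, ∫ x, ((f x : ℝ) - (f y : ℝ)) ^ 2 ∂(μ i : Measure Y) := by
      intro i
      simp_rw [hGapp]
      exact integral_finset_sum F fun f _ => hint i f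
    have hkey : ∀ i, δ ^ 2 ≤ ∫ x, G x ∂(μ i : Measure Y) := by
      intro i
      obtain ⟨f, hfF, hfu⟩ := hbad i
      have hdist : ε f ≤ dist (E (μ i) f) (E δy f) := by
        by_contra h
        push_neg at h
        exact hfu (hεball f hfF (Metric.mem_ball.mpr h))
      rw [NNReal.dist_eq, hEval, hEdirac] at hdist
      set h0 : Y →ᵇ ℝ := mkOfCompact ⟨fun x => (f x : ℝ) - (f y : ℝ),
        (NNReal.continuous_coe.comp f.continuous).sub continuous_const⟩ with hh0
      have hCS := sq_int_le (μ i : Measure Y) h0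
      have hfint : Integrable (fun x => (f x : ℝ)) (μ i : Measure Y) :=
        (mkOfCompact ⟨fun x => ((f x : ℝ)),
          NNReal.continuous_coe.comp f.continuous⟩).integrable _
      have hint_h0 : ∫ x, h0 x ∂(μ i : Measure Y)
          = (∫ x, (f x : ℝ) ∂(μ i : Measure Y)) - (f y : ℝ) := by
        have e : ∫ x, h0 x ∂(μ i : Measure Y)
            = ∫ x, ((f x : ℝ) - (f y : ℝ)) ∂(μ i : Measure Y) := rfl
        rw [e, integral_sub hfint (integrable_const _), integral_const]
        simp
      have h1 : δ ≤ |∫ x, h0 x ∂(μ i : Measure Y)| := by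
        rw [hint_h0]
        exact (Finset.inf'_le ε hfF).trans hdist
      have h2 : δ ^ 2 ≤ (∫ x, h0 x ∂(μ i : Measure Y)) ^ 2 := by
        have := pow_le_pow_left₀ hδpos.le h1 2
        simpa [sq_abs] using this
      have h3 : ∫ x, (h0 x) ^ 2 ∂(μ i : Measure Y) ≤ ∫ x, G x ∂(μ i : Measure Y) := by
        rw [hGint i]
        calc ∫ x, (h0 x) ^ 2 ∂(μ i : Measure Y)
            = ∫ x, ((f x : ℝ) - (f y : ℝ)) ^ 2 ∂(μ i : Measure Y) := rfl
          _ ≤ ∑ g ∈ F, ∫ x, ((g x : ℝ) - (g y : ℝ)) ^ 2 ∂(μ i : Measure Y) :=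
            Finset.single_le_sum (f := fun g : Y →ᵇ ℝ≥0 =>
                ∫ x, ((g x : ℝ) - (g y : ℝ)) ^ 2 ∂(μ i : Measure Y))
              (fun g _ => integral_nonneg fun x => sq_nonneg _) hfF
      linarith
    set M : ℝ := ‖G‖ with hMdef
    have hGy : G y = 0 := by
      rw [hGapp]
      simp
    have hGnonneg : ∀ x, 0 ≤ G x := fun x => by
      rw [hGapp]; exact Finset.sum_nonneg fun g _ => sq_nonneg _
    have hGle : ∀ x, G x ≤ M := fun x =>
      (le_abs_self _).trans (by simpa [Real.norm_eq_abs] using G.norm_coe_le_norm x)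
    set φ : C(Y, ℝ) := ContinuousMap.const Y M - G.toContinuousMap with hφdef
    have hφapp : ∀ x, φ x = M - G x := fun x => rfl
    have hφnorm : ‖φ‖ = M := by
      apply le_antisymm
      · apply (ContinuousMap.norm_le _ (norm_nonneg G)).mpr
        intro x
        rw [hφapp x, Real.norm_eq_abs]
        have hM0 : (0 : ℝ) ≤ M := norm_nonneg G
        exact abs_le.mpr ⟨by linarith [hGle x], by linarith [hGnonneg x]⟩
      · calc M = |φ y| := by
              rw [hφapp y, hGy, sub_zero, abs_of_nonneg (norm_nonneg G)]
          _ ≤ ‖φ‖ := by simpa [Real.norm_eq_abs] using φ.norm_coe_le_norm y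
    have hsup := hb φ
    have hile : ∀ i, |∫ x, φ x ∂(μ i : Measure Y)| ≤ M - δ ^ 2 := by
      intro i
      have hGi : Integrable (fun x => G x) (μ i : Measure Y) := G.integrable _
      have hintφ : ∫ x, φ x ∂(μ i : Measure Y) = M - ∫ x, G x ∂(μ i : Measure Y) := by
        simp_rw [hφapp]
        rw [integral_sub (integrable_const _) hGi, integral_const]
        simp
      have hnn : 0 ≤ ∫ x, φ x ∂(μ i : Measure Y) :=
        integral_nonneg fun x => by
          simp only [Pi.zero_apply]
          rw [hφapp x]
          linarith [hGle x]
      rw [abs_of_nonneg hnn, hintφ]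
      linarith [hkey i]
    rw [hφnorm] at hsup
    have hfin : M ≤ M - δ ^ 2 := by
      calc M = ⨆ i, |∫ x, φ x ∂(μ i : Measure Y)| := hsup
        _ ≤ M - δ ^ 2 := ciSup_le hile
    nlinarith
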